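/- arXiv:2204.02343 — 2 statements merged into one kernel-verified Lean document; each statement's English description precedes it below -/
import Mathlib

section
/- Let k ∈ ℕ with k ≥ 1, let z = (z₁,…,z_k) ∈ ℝ^k with z₁ < … < z_k, let α = (α₁,…,α_k) ∈ ℝ^k and let ν ∈ (0, ρ_{z,α}). Then the derivative G_{z,α,ν}' : ℝ → ℝ is Lipschitz continuous on ℝ, and G_{z,α,ν}'(z_i) = 1 for all i ∈ {1,…,k}. -/
/-- The bump function `φ(x) = (1 - x²)⁴ · 1_{[-1,1]}(x)`. -/
noncomputable def phi (x : ℝ) : ℝ := if x ∈ Set.Icc (-1 : ℝ) 1 then (1 - x ^ 2) ^ 4 else 0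

/-- The transformation `G_{z,α,ν}(x) = x + Σ_{i=1}^k α_i (x - z_i)|x - z_i| φ((x - z_i)/ν)`. -/
noncomputable def Gfun (k : ℕ) (z α : Fin k → ℝ) (ν : ℝ) (x : ℝ) : ℝ :=
  x + ∑ i : Fin k, α i * (x - z i) * |x - z i| * phi ((x - z i) / ν)

noncomputable def uu (t : ℝ) : ℝ := max (1 - t ^ 2) 0

lemma uu_nonneg (t : ℝ) : 0 ≤ uu t := le_max_right _ _
lemma uu_le_one (t : ℝ) : uu t ≤ 1 := max_le (by nlinarith [sq_nonneg t]) one_pos.le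

lemma phi_eq (t : ℝ) : phi t = uu t ^ 4 := by
  unfold phi uu
  by_cases h : t ∈ Set.Icc (-1 : ℝ) 1
  · rw [if_pos h, max_eq_left]
    obtain ⟨h1, h2⟩ := h; nlinarith
  · rw [if_neg h, max_eq_right]
    · norm_num
    · simp only [Set.mem_Icc, not_and_or, not_le] at h
      rcases h with h | h <;> nlinarith

lemma uu_eq (t : ℝ) : uu t = 1 - (min |t| 1) ^ 2 := by
  unfold uu
  rcases le_or_gt (|t|) 1 with h | h
  · rw [min_eq_left h, max_eq_left (by nlinarith [abs_nonneg t, sq_abs t])]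
    rw [sq_abs]
  · rw [min_eq_right h.le, max_eq_right (by nlinarith [sq_abs t])]
    norm_num

/-- Product of bounded Lipschitz functions is Lipschitz. -/
lemma lip_mul {f g : ℝ → ℝ} {Kf Kg A B : NNReal}
    (hf : LipschitzWith Kf f) (hg : LipschitzWith Kg g)
    (hA : ∀ x, |f x| ≤ A) (hB : ∀ x, |g x| ≤ B) :
    LipschitzWith (A * Kg + B * Kf) (fun x => f x * g x) := by
  apply LipschitzWith.of_dist_le_mul
  intro x y
  have h1 := hf.dist_le_mul x y
  have h2 := hg.dist_le_mul x y
  simp only [Real.dist_eq] at h1 h2 ⊢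
  have e : f x * g x - f y * g y = f x * (g x - g y) + g y * (f x - f y) := by ring
  rw [e]
  calc |f x * (g x - g y) + g y * (f x - f y)|
      ≤ |f x * (g x - g y)| + |g y * (f x - f y)| := abs_add_le _ _
    _ = |f x| * |g x - g y| + |g y| * |f x - f y| := by rw [abs_mul, abs_mul]
    _ ≤ (A : ℝ) * ((Kg : ℝ) * |x - y|) + (B : ℝ) * ((Kf : ℝ) * |x - y|) := by
        gcongr
        exacts [hA x, hB y]
    _ = ((A * Kg + B * Kf : NNReal) : ℝ) * |x - y| := by push_cast; ring

lemma lip_const_mul {f : ℝ → ℝ} {K : NNReal} (c : ℝ) (hf : LipschitzWith K f) :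
    LipschitzWith (‖c‖₊ * K) (fun x => c * f x) := by
  apply LipschitzWith.of_dist_le_mul
  intro x y
  have h1 := hf.dist_le_mul x y
  simp only [Real.dist_eq] at h1 ⊢
  rw [show c * f x - c * f y = c * (f x - f y) by ring, abs_mul]
  calc |c| * |f x - f y| ≤ |c| * ((K : ℝ) * |x - y|) := by gcongr
    _ = ((‖c‖₊ * K : NNReal) : ℝ) * |x - y| := by push_cast [Real.norm_eq_abs]; ring

lemma lip_div_const (c : ℝ) : LipschitzWith ‖c⁻¹‖₊ (fun x : ℝ => x / c) := by
  apply LipschitzWith.of_dist_le_mul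
  intro x y
  simp only [Real.dist_eq, div_sub_div_same]
  rw [div_eq_inv_mul, abs_mul]
  simp [Real.norm_eq_abs, abs_inv]

lemma lip_sub_const (c : ℝ) : LipschitzWith 1 (fun x : ℝ => x - c) := by
  apply LipschitzWith.of_dist_le_mul
  intro x y
  simp [Real.dist_eq]

lemma lip_sum {ι : Type*} (s : Finset ι) (f : ι → ℝ → ℝ)
    (hf : ∀ i ∈ s, ∃ K, LipschitzWith K (f i)) :
    ∃ K, LipschitzWith K (fun x => ∑ i ∈ s, f i x) := by
  classical
  induction s using Finset.induction_on with
  | empty => exact ⟨0, by simpa using LipschitzWith.const (0 : ℝ)⟩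
  | @insert a s hnot ih =>
    obtain ⟨K1, hK1⟩ := hf a (Finset.mem_insert_self a s)
    obtain ⟨K2, hK2⟩ := ih (fun i hi => hf i (Finset.mem_insert_of_mem hi))
    refine ⟨K1 + K2, ?_⟩
    have := hK1.add hK2
    simpa [Finset.sum_insert hnot] using this

noncomputable def cl (a t : ℝ) : ℝ := max (-a) (min t a)

lemma lip_cl (a : ℝ) : LipschitzWith 1 (cl a) :=
  (LipschitzWith.id.min_const a).const_max (-a)

lemma abs_cl_le (a : ℝ) (ha : 0 ≤ a) (t : ℝ) : |cl a t| ≤ a := by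
  rw [abs_le]; unfold cl
  constructor
  · exact le_max_left _ _
  · exact max_le (by linarith) (min_le_right _ _)

lemma cl_of_abs_le {a t : ℝ} (h : |t| ≤ a) : cl a t = t := by
  rw [abs_le] at h
  unfold cl
  rw [min_eq_left h.2, max_eq_right h.1]

noncomputable def mn (a t : ℝ) : ℝ := min |t| a

lemma lip_abs : LipschitzWith 1 (fun t : ℝ => |t|) := by
  apply LipschitzWith.of_dist_le_mul
  intro x y
  simp only [Real.dist_eq, NNReal.coe_one, one_mul]
  exact abs_abs_sub_abs_le_abs_sub x y

lemma lip_mn (a : ℝ) : LipschitzWith 1 (mn a) :=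
  lip_abs.min_const a

lemma abs_mn_le {a : ℝ} (ha : 0 ≤ a) (t : ℝ) : |mn a t| ≤ a := by
  rw [abs_le]; unfold mn
  exact ⟨le_trans (by linarith) (le_min (abs_nonneg t) ha), min_le_right _ _⟩

lemma lip_uu : LipschitzWith 2 uu := by
  have h : uu = fun t => (1:ℝ) - mn 1 t * mn 1 t := by
    funext t; rw [uu_eq]; unfold mn; ring
  rw [h]
  have hm : LipschitzWith (1 * 1 + 1 * 1) (fun t => mn 1 t * mn 1 t) :=
    lip_mul (lip_mn 1) (lip_mn 1) (abs_mn_le one_pos.le) (abs_mn_le one_pos.le)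
  have := (LipschitzWith.const (1:ℝ)).sub hm
  norm_num at this ⊢
  exact this

noncomputable def psi (t : ℝ) : ℝ := -8 * t * uu t ^ 3

lemma psi_eq (t : ℝ) : psi t = -8 * (cl 1 t * (uu t * (uu t * uu t))) := by
  unfold psi
  rcases le_or_gt (|t|) 1 with h | h
  · rw [cl_of_abs_le h]; ring
  · have hu : uu t = 0 := by
      unfold uu
      rw [max_eq_right]
      nlinarith [sq_abs t]
    rw [hu]; ring

lemma abs_uu_le (t : ℝ) : |uu t| ≤ (1 : NNReal) := by
  rw [abs_le]; constructor
  · simpa using le_trans (by norm_num) (uu_nonneg t)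
  · simpa using uu_le_one t

lemma lip_uu' : LipschitzWith 2 uu := lip_uu

lemma lip_uu2 : LipschitzWith 4 (fun t => uu t * uu t) := by
  have := lip_mul lip_uu lip_uu abs_uu_le abs_uu_le
  norm_num at this
  exact this

lemma abs_uu2_le (t : ℝ) : |uu t * uu t| ≤ (1 : NNReal) := by
  have h : |uu t| ≤ 1 := by simpa using abs_uu_le t
  rw [abs_mul, NNReal.coe_one]
  exact mul_le_one₀ h (abs_nonneg _) h

lemma lip_uu3 : LipschitzWith 6 (fun t => uu t * (uu t * uu t)) := by
  have := lip_mul lip_uu lip_uu2 abs_uu_le abs_uu2_le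
  norm_num at this
  exact this

lemma abs_uu3_le (t : ℝ) : |uu t * (uu t * uu t)| ≤ (1 : NNReal) := by
  have h : |uu t| ≤ 1 := by simpa using abs_uu_le t
  have h2 : |uu t * uu t| ≤ 1 := by simpa using abs_uu2_le t
  rw [abs_mul, NNReal.coe_one]
  exact mul_le_one₀ h (abs_nonneg _) h2

lemma lip_phi : LipschitzWith 8 phi := by
  have h : phi = fun t => uu t * (uu t * (uu t * uu t)) := by
    funext t; rw [phi_eq]; ring
  rw [h]
  have := lip_mul lip_uu lip_uu3 abs_uu_le abs_uu3_le
  norm_num at this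
  exact this

lemma abs_phi_le (t : ℝ) : |phi t| ≤ (1 : NNReal) := by
  rw [phi_eq, abs_pow]
  simpa using pow_le_one₀ (abs_nonneg _) (by simpa using abs_uu_le t)

lemma lip_psi : ∃ K, LipschitzWith K psi := by
  have h : psi = fun t => -8 * (cl 1 t * (uu t * (uu t * uu t))) := funext psi_eq
  rw [h]
  have h1 : LipschitzWith (1 * 6 + 1 * 1) (fun t => cl 1 t * (uu t * (uu t * uu t))) :=
    lip_mul (lip_cl 1) lip_uu3 (fun t => by simpa using abs_cl_le 1 one_pos.le t) abs_uu3_le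
  exact ⟨_, lip_const_mul (-8) h1⟩

lemma abs_psi_le (t : ℝ) : |psi t| ≤ ((8 : NNReal) : ℝ) := by
  rw [psi_eq, abs_mul]
  have h1 : |cl 1 t * (uu t * (uu t * uu t))| ≤ 1 := by
    rw [abs_mul]
    exact mul_le_one₀ (by simpa using abs_cl_le 1 one_pos.le t) (abs_nonneg _)
      (by simpa using abs_uu3_le t)
  calc |(-8 : ℝ)| * _ ≤ |(-8 : ℝ)| * 1 := by gcongr
    _ = ((8 : NNReal) : ℝ) := by norm_num

lemma uu_eq_zero {t : ℝ} (h : 1 ≤ |t|) : uu t = 0 := by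
  unfold uu
  rw [max_eq_right]
  nlinarith [sq_abs t]

open Filter Topology in
lemma hasDerivAt_phi (t : ℝ) : HasDerivAt phi (psi t) t := by
  rcases lt_trichotomy (|t|) 1 with h | h | h
  · -- interior case
    have hmem : t ∈ Set.Ioo (-1 : ℝ) 1 := by
      rw [Set.mem_Ioo, ← abs_lt]; exact h
    have hev : (fun s => (1 - s ^ 2) ^ 4) =ᶠ[𝓝 t] phi := by
      filter_upwards [isOpen_Ioo.mem_nhds hmem] with s hs
      unfold phi
      rw [if_pos (Set.mem_Icc_of_Ioo hs)]
    have hd : HasDerivAt (fun s => (1 - s ^ 2) ^ 4) (psi t) t := by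
      have h1 : HasDerivAt (fun s : ℝ => 1 - s ^ 2) (-(2 * t)) t := by
        exact ((hasDerivAt_const t (1:ℝ)).sub (hasDerivAt_pow 2 t)).congr_deriv (by simp)
      have := h1.pow 4
      refine this.congr_deriv ?_
      have habs := abs_lt.mp h
      unfold psi uu
      rw [max_eq_left (by nlinarith)]
      ring
    exact hd.congr_of_eventuallyEq hev.symm
  · -- boundary case |t| = 1
    have hpsi : psi t = 0 := by
      unfold psi
      rw [uu_eq_zero h.ge]
      ring
    rw [hpsi]
    rw [hasDerivAt_iff_tendsto_slope]
    have hphit : phi t = 0 := by rw [phi_eq, uu_eq_zero h.ge]; ring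
    apply squeeze_zero_norm (a := fun y => 16 * |y - t| ^ 3)
    · intro y
      rcases eq_or_ne y t with rfl | hy
      · simp [slope, hphit]
      · have hslope : slope phi t y = (phi y - phi t) / (y - t) := by
          rw [slope_def_field]
        have huy : |uu y| ≤ 2 * |y - t| := by
          have := lip_uu.dist_le_mul y t
          simp only [Real.dist_eq] at this
          calc |uu y| = |uu y - uu t| := by rw [uu_eq_zero h.ge]; ring_nf
            _ ≤ 2 * |y - t| := by push_cast at this; exact this
        have hphiy : |phi y| ≤ 16 * |y - t| ^ 4 := by
          rw [phi_eq, abs_pow]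
          calc |uu y| ^ 4 ≤ (2 * |y - t|) ^ 4 := by gcongr
            _ = 16 * |y - t| ^ 4 := by ring
        rw [Real.norm_eq_abs, hslope, hphit, sub_zero, abs_div]
        rw [div_le_iff₀ (by simpa [abs_sub_comm] using abs_pos.mpr (sub_ne_zero.mpr hy))]
        calc |phi y| ≤ 16 * |y - t| ^ 4 := hphiy
          _ = 16 * |y - t| ^ 3 * |y - t| := by ring
    · have : Tendsto (fun y : ℝ => 16 * |y - t| ^ 3) (𝓝 t) (𝓝 (16 * |t - t| ^ 3)) := by
        apply Continuous.tendsto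
        continuity
      simpa using this.mono_left nhdsWithin_le_nhds
  · -- exterior case
    have hpsi : psi t = 0 := by
      unfold psi
      rw [uu_eq_zero h.le]
      ring
    rw [hpsi]
    have hev : (fun _ : ℝ => (0:ℝ)) =ᶠ[𝓝 t] phi := by
      have hopen : IsOpen {s : ℝ | 1 < |s|} := isOpen_lt continuous_const continuous_abs
      filter_upwards [hopen.mem_nhds h] with s hs
      unfold phi
      rw [if_neg]
      simp only [Set.mem_Icc, not_and_or, not_le]
      rcases lt_or_ge s 0 with hs' | hs'
      · left; rw [abs_of_neg hs'] at hs; linarith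
      · right; rw [abs_of_nonneg hs'] at hs; linarith
    exact (hasDerivAt_const t (0:ℝ)).congr_of_eventuallyEq hev.symm

open Filter Topology in
lemma hasDerivAt_sq_abs (x : ℝ) : HasDerivAt (fun y : ℝ => y * |y|) (2 * |x|) x := by
  rcases lt_trichotomy x 0 with h | rfl | h
  · have hev : (fun y : ℝ => -(y ^ 2)) =ᶠ[𝓝 x] (fun y : ℝ => y * |y|) := by
      filter_upwards [isOpen_Iio.mem_nhds (Set.mem_Iio.mpr h)] with y hy
      rw [abs_of_neg hy]; ring
    have hd : HasDerivAt (fun y : ℝ => -(y ^ 2)) (2 * |x|) x := by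
      have := (hasDerivAt_pow 2 x).neg
      refine this.congr_deriv ?_
      rw [abs_of_neg h]; push_cast; ring
    exact hd.congr_of_eventuallyEq hev.symm
  · rw [hasDerivAt_iff_tendsto_slope]
    simp only [abs_zero, mul_zero]
    apply squeeze_zero_norm (a := fun y => |y|)
    · intro y
      rcases eq_or_ne y 0 with rfl | hy
      · simp [slope]
      · rw [slope_def_field]
        simp only [mul_zero, abs_zero, sub_zero, zero_mul]
        rw [Real.norm_eq_abs, abs_div, abs_mul, abs_abs]
        rw [mul_div_assoc, div_self (abs_ne_zero.mpr hy)]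
        simp
    · simpa using (continuous_abs.tendsto (0:ℝ)).mono_left nhdsWithin_le_nhds
  · have hev : (fun y : ℝ => y ^ 2) =ᶠ[𝓝 x] (fun y : ℝ => y * |y|) := by
      filter_upwards [isOpen_Ioi.mem_nhds (Set.mem_Ioi.mpr h)] with y hy
      rw [abs_of_pos hy]; ring
    have hd : HasDerivAt (fun y : ℝ => y ^ 2) (2 * |x|) x := by
      have := hasDerivAt_pow 2 x
      refine this.congr_deriv ?_
      rw [abs_of_pos h]; push_cast; ring
    exact hd.congr_of_eventuallyEq hev.symm

noncomputable def Fd (ν x : ℝ) : ℝ := 2 * |x| * phi (x / ν) + x * |x| * (psi (x / ν) * (1 / ν))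

lemma hasDerivAt_F {ν : ℝ} (hν : ν ≠ 0) (x : ℝ) :
    HasDerivAt (fun y : ℝ => y * |y| * phi (y / ν)) (Fd ν x) x := by
  have h1 : HasDerivAt (fun y : ℝ => y / ν) (1 / ν) x := by
    simpa using (hasDerivAt_id x).div_const ν
  have h2 : HasDerivAt (fun y : ℝ => phi (y / ν)) (psi (x / ν) * (1 / ν)) x :=
    by have := (hasDerivAt_phi (x / ν)).comp x h1; exact this
  exact (hasDerivAt_sq_abs x).mul h2

/-- Lipschitz and bounded. -/
def LB (f : ℝ → ℝ) : Prop :=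
  (∃ K : NNReal, LipschitzWith K f) ∧ ∃ A : ℝ, 0 ≤ A ∧ ∀ x, |f x| ≤ A

lemma LB.mul {f g : ℝ → ℝ} (hf : LB f) (hg : LB g) : LB (fun x => f x * g x) := by
  obtain ⟨⟨Kf, hKf⟩, A, hA0, hA⟩ := hf
  obtain ⟨⟨Kg, hKg⟩, B, hB0, hB⟩ := hg
  constructor
  · refine ⟨A.toNNReal * Kg + B.toNNReal * Kf, lip_mul hKf hKg ?_ ?_⟩
    · intro x
      rw [Real.coe_toNNReal A hA0]
      exact hA x
    · intro x
      rw [Real.coe_toNNReal B hB0]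
      exact hB x
  · refine ⟨A * B, mul_nonneg hA0 hB0, fun x => ?_⟩
    rw [abs_mul]
    exact mul_le_mul (hA x) (hB x) (abs_nonneg _) hA0

lemma LB.const (c : ℝ) : LB (fun _ => c) :=
  ⟨⟨0, LipschitzWith.const c⟩, |c|, abs_nonneg c, fun _ => le_refl _⟩

lemma LB_mn {ν : ℝ} (hν : 0 < ν) : LB (mn ν) :=
  ⟨⟨1, lip_mn ν⟩, ν, hν.le, abs_mn_le hν.le⟩

lemma LB_cl {ν : ℝ} (hν : 0 < ν) : LB (cl ν) :=
  ⟨⟨1, lip_cl ν⟩, ν, hν.le, abs_cl_le ν hν.le⟩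

lemma LB_phi_div (ν : ℝ) : LB (fun x => phi (x / ν)) := by
  refine ⟨⟨8 * ‖ν⁻¹‖₊, lip_phi.comp (lip_div_const ν)⟩, 1, one_pos.le, fun x => ?_⟩
  simpa using abs_phi_le (x / ν)

lemma LB_psi_div (ν : ℝ) : LB (fun x => psi (x / ν)) := by
  obtain ⟨Kψ, hKψ⟩ := lip_psi
  refine ⟨⟨Kψ * ‖ν⁻¹‖₊, hKψ.comp (lip_div_const ν)⟩, 8, by norm_num, fun x => ?_⟩
  simpa using abs_psi_le (x / ν)

lemma lip_Fd {ν : ℝ} (hν : 0 < ν) : ∃ K : NNReal, LipschitzWith K (Fd ν) := by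
  have heq : Fd ν = fun x => (2 * mn ν x) * phi (x / ν)
      + (cl ν x * mn ν x) * (psi (x / ν) * (1 / ν)) := by
    funext x
    unfold Fd
    rcases le_or_gt (|x|) ν with h | h
    · rw [show mn ν x = |x| from min_eq_left h, cl_of_abs_le h]
    · have h1 : (1 : ℝ) ≤ |x / ν| := by
        rw [abs_div, abs_of_pos hν, le_div_iff₀ hν]; linarith
      have hphi : phi (x / ν) = 0 := by rw [phi_eq, uu_eq_zero h1]; ring
      have hpsi0 : psi (x / ν) = 0 := by unfold psi; rw [uu_eq_zero h1]; ring
      rw [hphi, hpsi0]; ring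
  rw [heq]
  have t1 : LB (fun x => (2 * mn ν x) * phi (x / ν)) :=
    LB.mul (LB.mul (LB.const 2) (LB_mn hν)) (LB_phi_div ν)
  have t2 : LB (fun x => (cl ν x * mn ν x) * (psi (x / ν) * (1 / ν))) :=
    LB.mul (LB.mul (LB_cl hν) (LB_mn hν)) (LB.mul (LB_psi_div ν) (LB.const (1 / ν)))
  obtain ⟨⟨K1, hK1⟩, -⟩ := t1
  obtain ⟨⟨K2, hK2⟩, -⟩ := t2
  exact ⟨K1 + K2, hK1.add hK2⟩

lemma Fd_zero (ν : ℝ) : Fd ν 0 = 0 := by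
  unfold Fd
  simp

lemma Fd_far {ν x : ℝ} (hν : 0 < ν) (h : ν ≤ |x|) : Fd ν x = 0 := by
  have h1 : (1 : ℝ) ≤ |x / ν| := by
    rw [abs_div, abs_of_pos hν, le_div_iff₀ hν]; linarith
  have hphi : phi (x / ν) = 0 := by rw [phi_eq, uu_eq_zero h1]; ring
  have hpsi0 : psi (x / ν) = 0 := by unfold psi; rw [uu_eq_zero h1]; ring
  unfold Fd
  rw [hphi, hpsi0]
  ring


/-- For `k ≥ 1`, `z₁ < … < z_k`, `α ∈ ℝ^k` and `ν ∈ (0, ρ_{z,α})`,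
the derivative `G_{z,α,ν}'` is Lipschitz continuous on `ℝ` and `G_{z,α,ν}'(z_i) = 1`
for all `i ∈ {1,…,k}`. -/
theorem stmt_4 (k : ℕ) (hk : 1 ≤ k) (z α : Fin k → ℝ) (hz : StrictMono z)
    (ν : ℝ) (hν0 : 0 < ν)
    (hν1 : ∀ i : Fin k, ν * (8 * |α i|) < 1)
    (hν2 : ∀ i j : Fin k, (i : ℕ) + 1 = (j : ℕ) → ν < (z j - z i) / 2) :
    (∃ K : NNReal, LipschitzWith K (deriv (Gfun k z α ν))) ∧
    (∀ i : Fin k, deriv (Gfun k z α ν) (z i) = 1) := by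
  have hG : ∀ x, HasDerivAt (Gfun k z α ν)
      (1 + ∑ i : Fin k, α i * Fd ν (x - z i)) x := by
    intro x
    have hGeq : Gfun k z α ν = fun x =>
        x + ∑ i : Fin k, α i * ((x - z i) * |x - z i| * phi ((x - z i) / ν)) := by
      funext y
      unfold Gfun
      congr 1
      apply Finset.sum_congr rfl
      intro i _
      ring
    rw [hGeq]
    apply HasDerivAt.add (hasDerivAt_id x)
    apply HasDerivAt.fun_sum
    intro i _
    have hc : HasDerivAt (fun y : ℝ => y - z i) 1 x := (hasDerivAt_id x).sub_const (z i)
    have h1 := HasDerivAt.comp x (hasDerivAt_F (ne_of_gt hν0) (x - z i)) hc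
    have h2 := h1.const_mul (α i)
    simpa [Function.comp, mul_one] using h2
  have hderiv : deriv (Gfun k z α ν) = fun x => 1 + ∑ i : Fin k, α i * Fd ν (x - z i) :=
    funext fun x => (hG x).deriv
  constructor
  · rw [hderiv]
    obtain ⟨KF, hKF⟩ := lip_Fd hν0
    obtain ⟨K, hK⟩ := lip_sum Finset.univ (fun i x => α i * Fd ν (x - z i))
      (fun i _ => ⟨_, lip_const_mul (α i) (hKF.comp (lip_sub_const (z i)))⟩)
    exact ⟨0 + K, (LipschitzWith.const (1 : ℝ)).add hK⟩
  · intro i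
    rw [hderiv]
    have hkey : ∀ a b : Fin k, (a : ℕ) < (b : ℕ) → 2 * ν < z b - z a := by
      intro a b hab
      have hlt : (a : ℕ) + 1 < k := lt_of_le_of_lt hab b.isLt
      set a' : Fin k := ⟨(a : ℕ) + 1, hlt⟩ with ha'
      have h1 := hν2 a a' rfl
      have h2 : z a' ≤ z b := hz.monotone (by simp [ha', Fin.le_def]; omega)
      linarith
    have hsum : ∑ j : Fin k, α j * Fd ν (z i - z j) = 0 := by
      apply Finset.sum_eq_zero
      intro j _
      rcases eq_or_ne j i with rfl | hne
      · simp [Fd_zero]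
      · have hfar : ν ≤ |z i - z j| := by
          rcases lt_or_gt_of_ne (fun h : (j : ℕ) = (i : ℕ) => hne (Fin.ext h)) with h | h
          · have := hkey j i h
            have := le_abs_self (z i - z j)
            linarith
          · have := hkey i j h
            have := le_abs_self (z j - z i)
            rw [abs_sub_comm] at this
            linarith
        rw [Fd_far hν0 hfar, mul_zero]
    simp only [hsum, add_zero]
end

section
/- Let k ∈ ℕ with k ≥ 1, let z = (z₁,…,z_k) ∈ ℝ^k with z₁ < … < z_k, let α = (α₁,…,α_k) ∈ ℝ^k and let ν ∈ (0, ρ_{z,α}), and set z₀ = −∞, z_{k+1} = ∞. Then for every i ∈ {1,…,k+1}, the derivative G_{z,α,ν}' is differentiable on the open interval (z_{i−1}, z_i) with a derivative G_{z,α,ν}'' that is bounded and Lipschitz continuous on (z_{i−1}, z_i); moreover, for every i ∈ {1,…,k} the one-sided limits of G_{z,α,ν}'' at z_i exist and satisfy lim_{x↑z_i} G_{z,α,ν}''(x) = −2α_i and lim_{x↓z_i} G_{z,α,ν}''(x) = 2α_i. -/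
open Set Filter Asymptotics


def e0 (x : ℝ) : ℝ := (1 - x^2)^4
def e1 (x : ℝ) : ℝ := -8*x*(1 - x^2)^3
def e2 (x : ℝ) : ℝ := -8*(1 - x^2)^3 + 48*x^2*(1 - x^2)^2
def e3 (x : ℝ) : ℝ := 144*x*(1 - x^2)^2 - 192*x^3*(1 - x^2)

lemma e0_deriv (x : ℝ) : HasDerivAt e0 (e1 x) x := by
  have h : HasDerivAt (fun x : ℝ => 1 - x^2) (-(2*x^1)) x :=
    (hasDerivAt_pow 2 x).const_sub 1
  have := h.pow 4
  refine this.congr_deriv ?_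
  simp [e1]; ring

lemma e1_deriv (x : ℝ) : HasDerivAt e1 (e2 x) x := by
  have h : HasDerivAt (fun x : ℝ => 1 - x^2) (-(2*x^1)) x :=
    (hasDerivAt_pow 2 x).const_sub 1
  have h3 := h.pow 3
  have := ((hasDerivAt_id x).const_mul (-8:ℝ)).mul h3
  refine this.congr_deriv ?_
  simp [e2]; ring

lemma e2_deriv (x : ℝ) : HasDerivAt e2 (e3 x) x := by
  have h : HasDerivAt (fun x : ℝ => 1 - x^2) (-(2*x^1)) x :=
    (hasDerivAt_pow 2 x).const_sub 1
  have h3 := (h.pow 3).const_mul (-8:ℝ)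
  have h2 := ((hasDerivAt_pow 2 x).const_mul (48:ℝ)).mul (h.pow 2)
  have := h3.add h2
  refine this.congr_deriv ?_
  simp [e3]; ring
noncomputable def pcut (f : ℝ → ℝ) (x : ℝ) : ℝ := if x ∈ Set.Icc (-1:ℝ) 1 then f x else 0

lemma pcut_deriv (f f' : ℝ → ℝ) (hf : ∀ x, HasDerivAt f (f' x) x)
    (h1 : f 1 = 0) (h1' : f (-1) = 0) (h2 : f' 1 = 0) (h2' : f' (-1) = 0) :
    ∀ x, HasDerivAt (pcut f) (pcut f' x) x := by
  intro x
  by_cases hb : x = 1 ∨ x = -1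
  · -- boundary points
    have hx0 : f x = 0 := by rcases hb with h | h <;> simp [h, h1, h1']
    have hx0' : f' x = 0 := by rcases hb with h | h <;> simp [h, h2, h2']
    have hxIcc : x ∈ Set.Icc (-1:ℝ) 1 := by rcases hb with h | h <;> simp [h]
    have hval : pcut f' x = 0 := by simp [pcut, hxIcc, hx0']
    rw [hval, hasDerivAt_iff_isLittleO]
    have H := (hasDerivAt_iff_isLittleO.mp (hf x))
    rw [hx0'] at H
    simp only [smul_zero, sub_zero, smul_eq_mul] at *
    refine (Asymptotics.isBigO_of_le _ fun y => ?_).trans_isLittleO H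
    have hpx : pcut f x = 0 := by simp [pcut, hxIcc, hx0]
    rw [hpx, sub_zero]
    by_cases hy : y ∈ Set.Icc (-1:ℝ) 1
    · simp [pcut, hy, hx0]
    · simp only [pcut]; rw [if_neg hy]; simp [hx0]
  · push_neg at hb
    by_cases hin : x ∈ Set.Ioo (-1:ℝ) 1
    · have hev : pcut f =ᶠ[nhds x] f := by
        filter_upwards [Ioo_mem_nhds hin.1 hin.2] with y hy
        simp [pcut, le_of_lt hy.1, le_of_lt hy.2]
      have hxIcc : x ∈ Set.Icc (-1:ℝ) 1 := ⟨le_of_lt hin.1, le_of_lt hin.2⟩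
      have : HasDerivAt (pcut f) (f' x) x := (hf x).congr_of_eventuallyEq hev
      simpa [pcut, hxIcc] using this
    · have hout : x ∉ Set.Icc (-1:ℝ) 1 := by
        intro h
        rcases lt_or_eq_of_le h.1 with h1x | h1x
        · rcases lt_or_eq_of_le h.2 with hx1 | hx1
          · exact hin ⟨h1x, hx1⟩
          · exact hb.1 hx1
        · exact hb.2 h1x.symm
      have hev : pcut f =ᶠ[nhds x] (fun _ => (0:ℝ)) := by
        filter_upwards [isOpen_compl_iff.mpr isClosed_Icc |>.mem_nhds hout] with y hy
        simp only [pcut]; rw [if_neg hy]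
      have : HasDerivAt (pcut f) 0 x := (hasDerivAt_const x 0).congr_of_eventuallyEq hev
      simpa [pcut, hout] using this

lemma pcut_eq_zero (f : ℝ → ℝ) {x : ℝ} (hx : 1 < |x|) : pcut f x = 0 := by
  have : x ∉ Set.Icc (-1:ℝ) 1 := by
    rw [Set.mem_Icc]; intro ⟨h1, h2⟩
    rcases abs_cases x with ⟨h, _⟩ | ⟨h, _⟩ <;> linarith [hx]
  simp [pcut, this]

lemma pcut_bound (f : ℝ → ℝ) (M : ℝ) (hM : 0 ≤ M) (h : ∀ x ∈ Set.Icc (-1:ℝ) 1, |f x| ≤ M)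
    (x : ℝ) : |pcut f x| ≤ M := by
  by_cases hx : x ∈ Set.Icc (-1:ℝ) 1
  · simpa [pcut, hx] using h x hx
  · simp [pcut, hx, hM]

lemma e0_bound : ∀ x ∈ Set.Icc (-1:ℝ) 1, |e0 x| ≤ 1 := by
  intro x hx
  obtain ⟨hx1, hx2⟩ := hx
  have h1 : x^2 ≤ 1 := by nlinarith
  have hy0 : (0:ℝ) ≤ 1 - x^2 := by linarith
  have hy1 : (1:ℝ) - x^2 ≤ 1 := by nlinarith [sq_nonneg x]
  have h4 : (1 - x^2)^4 ≤ 1 := pow_le_one₀ hy0 hy1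
  have h4' : 0 ≤ (1 - x^2)^4 := pow_nonneg hy0 4
  rw [abs_le]; unfold e0; constructor <;> linarith

lemma e1_bound : ∀ x ∈ Set.Icc (-1:ℝ) 1, |e1 x| ≤ 8 := by
  intro x hx
  obtain ⟨hx1, hx2⟩ := hx
  have h1 : x^2 ≤ 1 := by nlinarith
  have hy0 : (0:ℝ) ≤ 1 - x^2 := by linarith
  have hy1 : (1:ℝ) - x^2 ≤ 1 := by nlinarith [sq_nonneg x]
  have h3 : (1 - x^2)^3 ≤ 1 := pow_le_one₀ hy0 hy1
  have h3' : 0 ≤ (1 - x^2)^3 := pow_nonneg hy0 3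
  have hA := mul_nonneg (by linarith : (0:ℝ) ≤ 1 - x) h3'
  have hB := mul_nonneg (by linarith : (0:ℝ) ≤ 1 + x) h3'
  rw [abs_le]; unfold e1; constructor <;> nlinarith

lemma e2_bound : ∀ x ∈ Set.Icc (-1:ℝ) 1, |e2 x| ≤ 56 := by
  intro x hx
  obtain ⟨hx1, hx2⟩ := hx
  have h1 : x^2 ≤ 1 := by nlinarith
  have hy0 : (0:ℝ) ≤ 1 - x^2 := by linarith
  have hy1 : (1:ℝ) - x^2 ≤ 1 := by nlinarith [sq_nonneg x]
  have h3 : (1 - x^2)^3 ≤ 1 := pow_le_one₀ hy0 hy1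
  have h3' : 0 ≤ (1 - x^2)^3 := pow_nonneg hy0 3
  have h2 : (1 - x^2)^2 ≤ 1 := pow_le_one₀ hy0 hy1
  have h2' : 0 ≤ (1 - x^2)^2 := pow_nonneg hy0 2
  have hA := mul_nonneg (by linarith : (0:ℝ) ≤ 1 - x^2) h2'
  have hB : x^2 * (1 - x^2)^2 ≤ 1 := by nlinarith [sq_nonneg x]
  have hB' : 0 ≤ x^2 * (1 - x^2)^2 := mul_nonneg (sq_nonneg x) h2'
  rw [abs_le]; unfold e2; constructor <;> nlinarith

lemma e3_bound : ∀ x ∈ Set.Icc (-1:ℝ) 1, |e3 x| ≤ 336 := by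
  intro x hx
  obtain ⟨hx1, hx2⟩ := hx
  have h1 : x^2 ≤ 1 := by nlinarith
  have hy0 : (0:ℝ) ≤ 1 - x^2 := by linarith
  have hy1 : (1:ℝ) - x^2 ≤ 1 := by nlinarith [sq_nonneg x]
  have h2 : (1 - x^2)^2 ≤ 1 := pow_le_one₀ hy0 hy1
  have h2' : 0 ≤ (1 - x^2)^2 := pow_nonneg hy0 2
  have hx3a : x^3 ≤ 1 := by nlinarith
  have hx3b : -1 ≤ x^3 := by nlinarith
  have hA := mul_nonneg (by linarith : (0:ℝ) ≤ 1 - x) h2'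
  have hB := mul_nonneg (by linarith : (0:ℝ) ≤ 1 + x) h2'
  have hC := mul_nonneg (by linarith : (0:ℝ) ≤ 1 - x^3) hy0
  have hD := mul_nonneg (by linarith : (0:ℝ) ≤ 1 + x^3) hy0
  rw [abs_le]; unfold e3; constructor <;> nlinarith

noncomputable def sgn (u : ℝ) : ℝ := if u < 0 then -1 else 1

lemma sgn_abs (u : ℝ) : sgn u * |u| = u := by
  unfold sgn
  rcases lt_trichotomy u 0 with h | h | h
  · rw [if_pos h, abs_of_neg h]; ring
  · simp [h]
  · rw [if_neg (not_lt.mpr h.le), abs_of_pos h]; ring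

lemma abs_sgn (u : ℝ) : |sgn u| = 1 := by
  unfold sgn; split <;> simp

lemma mulabs_deriv (u : ℝ) : HasDerivAt (fun v : ℝ => v * |v|) (2 * |u|) u := by
  rcases lt_trichotomy u 0 with h | h | h
  · have hev : (fun v : ℝ => v * |v|) =ᶠ[nhds u] (fun v => -(v * v)) := by
      filter_upwards [Iio_mem_nhds h] with v hv
      rw [abs_of_neg hv]; ring
    have : HasDerivAt (fun v : ℝ => -(v * v)) (2 * |u|) u := by
      have := ((hasDerivAt_id u).mul (hasDerivAt_id u)).neg
      refine this.congr_deriv ?_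
      rw [abs_of_neg h]; simp; ring
    exact this.congr_of_eventuallyEq hev
  · subst h
    rw [hasDerivAt_iff_isLittleO]
    simp only [abs_zero, mul_zero, zero_mul, sub_zero, smul_eq_mul]
    rw [Asymptotics.isLittleO_iff]
    intro c hc
    filter_upwards [Metric.ball_mem_nhds 0 hc] with y hy
    simp only [Metric.mem_ball, Real.dist_eq, sub_zero] at hy
    have : ‖y * |y|‖ = |y| * |y| := by rw [norm_mul, Real.norm_eq_abs, Real.norm_eq_abs, abs_abs]
    rw [this]
    calc |y| * |y| ≤ c * |y| := by
          apply mul_le_mul_of_nonneg_right (le_of_lt hy) (abs_nonneg y)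
      _ = c * ‖y‖ := by simp [Real.norm_eq_abs]
  · have hev : (fun v : ℝ => v * |v|) =ᶠ[nhds u] (fun v => v * v) := by
      filter_upwards [Ioi_mem_nhds h] with v hv
      rw [abs_of_pos hv]
    have : HasDerivAt (fun v : ℝ => v * v) (2 * |u|) u := by
      have := (hasDerivAt_id u).mul (hasDerivAt_id u)
      refine this.congr_deriv ?_
      rw [abs_of_pos h]; simp; ring
    exact this.congr_of_eventuallyEq hev

lemma abs_deriv {u : ℝ} (hu : u ≠ 0) : HasDerivAt (fun v : ℝ => |v|) (sgn u) u := by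
  rcases lt_or_gt_of_ne hu with h | h
  · have hev : (fun v : ℝ => |v|) =ᶠ[nhds u] (fun v => -v) := by
      filter_upwards [Iio_mem_nhds h] with v hv
      exact abs_of_neg hv
    have : HasDerivAt (fun v : ℝ => -v) (sgn u) u := by
      have := (hasDerivAt_id u).neg
      refine this.congr_deriv ?_
      simp [sgn, h]
    exact this.congr_of_eventuallyEq hev
  · have hev : (fun v : ℝ => |v|) =ᶠ[nhds u] (fun v => v) := by
      filter_upwards [Ioi_mem_nhds h] with v hv
      exact abs_of_pos hv
    have : HasDerivAt (fun v : ℝ => v) (sgn u) u := by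
      have := hasDerivAt_id u
      refine this.congr_deriv ?_
      simp [sgn, not_lt.mpr h.le]
    exact this.congr_of_eventuallyEq hev

lemma sgn_eventually_const {a x : ℝ} (hx : x ≠ a) :
    (fun y => sgn (y - a)) =ᶠ[nhds x] (fun _ => sgn (x - a)) := by
  rcases lt_or_gt_of_ne hx with h | h
  · filter_upwards [Iio_mem_nhds h] with y hy
    have h1 : y - a < 0 := by simp at hy; linarith
    have h2 : x - a < 0 := by linarith
    simp [sgn, h1, h2]
  · filter_upwards [Ioi_mem_nhds h] with y hy
    have h1 : ¬ (y - a < 0) := by simp at hy ⊢; linarith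
    have h2 : ¬ (x - a < 0) := by simp; linarith
    simp [sgn, h1, h2]

noncomputable def q0 (ν a x : ℝ) : ℝ := (x-a) * |x-a| * pcut e0 ((x-a)/ν)
noncomputable def q1 (ν a x : ℝ) : ℝ :=
  2*|x-a| * pcut e0 ((x-a)/ν) + (x-a)*|x-a| * pcut e1 ((x-a)/ν) / ν
noncomputable def q2 (ν a x : ℝ) : ℝ :=
  2*sgn (x-a) * pcut e0 ((x-a)/ν) + 4*|x-a| * pcut e1 ((x-a)/ν) / ν
    + (x-a)*|x-a| * pcut e2 ((x-a)/ν) / ν^2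
noncomputable def q3 (ν a x : ℝ) : ℝ :=
  6*sgn (x-a) * pcut e1 ((x-a)/ν) / ν + 6*|x-a| * pcut e2 ((x-a)/ν) / ν^2
    + (x-a)*|x-a| * pcut e3 ((x-a)/ν) / ν^3

lemma pd0 : ∀ x, HasDerivAt (pcut e0) (pcut e1 x) x :=
  pcut_deriv e0 e1 e0_deriv (by norm_num [e0]) (by norm_num [e0]) (by norm_num [e1])
    (by norm_num [e1])

lemma pd1 : ∀ x, HasDerivAt (pcut e1) (pcut e2 x) x :=
  pcut_deriv e1 e2 e1_deriv (by norm_num [e1]) (by norm_num [e1]) (by norm_num [e2])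
    (by norm_num [e2])

lemma pd2 : ∀ x, HasDerivAt (pcut e2) (pcut e3 x) x :=
  pcut_deriv e2 e3 e2_deriv (by norm_num [e2]) (by norm_num [e2]) (by norm_num [e3])
    (by norm_num [e3])

section qlemmas
variable {ν a x : ℝ}

lemma inner_deriv (ν a x : ℝ) : HasDerivAt (fun y : ℝ => (y - a)/ν) (1/ν) x :=
  ((hasDerivAt_id x).sub_const a).div_const ν

lemma P0chain (ν a x : ℝ) :
    HasDerivAt (fun y : ℝ => pcut e0 ((y-a)/ν)) (pcut e1 ((x-a)/ν) * (1/ν)) x :=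
  by have := (pd0 ((x-a)/ν)).comp x (inner_deriv ν a x); exact this

lemma P1chain (ν a x : ℝ) :
    HasDerivAt (fun y : ℝ => pcut e1 ((y-a)/ν)) (pcut e2 ((x-a)/ν) * (1/ν)) x :=
  by have := (pd1 ((x-a)/ν)).comp x (inner_deriv ν a x); exact this

lemma P2chain (ν a x : ℝ) :
    HasDerivAt (fun y : ℝ => pcut e2 ((y-a)/ν)) (pcut e3 ((x-a)/ν) * (1/ν)) x :=
  by have := (pd2 ((x-a)/ν)).comp x (inner_deriv ν a x); exact this

lemma Achain (a x : ℝ) : HasDerivAt (fun y : ℝ => (y-a)*|y-a|) (2*|x-a|) x := by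
  have := (mulabs_deriv (x-a)).comp x ((hasDerivAt_id x).sub_const a)
  exact this.congr_deriv (mul_one _)

lemma Bchain {a x : ℝ} (hx : x ≠ a) : HasDerivAt (fun y : ℝ => |y-a|) (sgn (x-a)) x := by
  have := (abs_deriv (sub_ne_zero.mpr hx)).comp x ((hasDerivAt_id x).sub_const a)
  exact this.congr_deriv (mul_one _)

lemma q0_deriv (ν a x : ℝ) : HasDerivAt (q0 ν a) (q1 ν a x) x := by
  have := (Achain a x).mul (P0chain ν a x)
  refine this.congr_deriv ?_
  unfold q1; ring

lemma q1_deriv {ν a x : ℝ} (hx : x ≠ a) : HasDerivAt (q1 ν a) (q2 ν a x) x := by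
  have t1 := ((Bchain hx).const_mul (2:ℝ)).mul (P0chain ν a x)
  have t2 := ((Achain a x).mul (P1chain ν a x)).div_const ν
  have := t1.add t2
  have heq : q1 ν a = (fun y => 2 * |y-a| * pcut e0 ((y-a)/ν)
      + (y-a)*|y-a| * pcut e1 ((y-a)/ν) / ν) := by
    funext y; unfold q1; ring
  rw [heq]
  refine this.congr_deriv ?_
  unfold q2; ring

lemma q2_deriv {ν a x : ℝ} (hx : x ≠ a) : HasDerivAt (q2 ν a) (q3 ν a x) x := by
  have t1 := (P0chain ν a x).const_mul (2 * sgn (x-a))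
  have t2 := (((Bchain hx).const_mul (4:ℝ)).mul (P1chain ν a x)).div_const ν
  have t3 := ((Achain a x).mul (P2chain ν a x)).div_const (ν^2)
  have hD := (t1.add t2).add t3
  have hev : q2 ν a =ᶠ[nhds x] (fun y => 2 * sgn (x-a) * pcut e0 ((y-a)/ν)
      + 4 * |y-a| * pcut e1 ((y-a)/ν) / ν + (y-a)*|y-a| * pcut e2 ((y-a)/ν) / ν^2) := by
    filter_upwards [sgn_eventually_const hx] with y hy
    unfold q2; rw [hy]
  have : HasDerivAt (fun y => 2 * sgn (x-a) * pcut e0 ((y-a)/ν)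
      + 4 * |y-a| * pcut e1 ((y-a)/ν) / ν + (y-a)*|y-a| * pcut e2 ((y-a)/ν) / ν^2)
      (q3 ν a x) x := by
    refine hD.congr_deriv ?_
    unfold q3; ring
  exact this.congr_of_eventuallyEq hev

end qlemmas

lemma abs_le_of_div {ν u : ℝ} (hν : 0 < ν) (h : |u/ν| ≤ 1) : |u| ≤ ν := by
  rw [abs_div, abs_of_pos hν, div_le_one hν] at h
  exact h

lemma q2_far {ν a x : ℝ} (hν : 0 < ν) (h : ν < |x - a|) : q2 ν a x = 0 := by
  have ht : 1 < |(x-a)/ν| := by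
    rw [abs_div, abs_of_pos hν, lt_div_iff₀ hν]; linarith
  simp [q2, pcut_eq_zero _ ht]

lemma q2_bound {ν : ℝ} (hν : 0 < ν) (a x : ℝ) : |q2 ν a x| ≤ 90 := by
  by_cases ht : |(x-a)/ν| ≤ 1
  · have hu : |x - a| ≤ ν := abs_le_of_div hν ht
    have hP0 : |pcut e0 ((x-a)/ν)| ≤ 1 := pcut_bound e0 1 one_pos.le e0_bound _
    have hP1 : |pcut e1 ((x-a)/ν)| ≤ 8 := pcut_bound e1 8 (by norm_num) e1_bound _
    have hP2 : |pcut e2 ((x-a)/ν)| ≤ 56 := pcut_bound e2 56 (by norm_num) e2_bound _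
    have h1 : |2*sgn (x-a) * pcut e0 ((x-a)/ν)| ≤ 2 := by
      rw [abs_mul, abs_mul, abs_sgn]
      calc |2| * 1 * |pcut e0 ((x-a)/ν)| = 2 * |pcut e0 ((x-a)/ν)| := by norm_num
        _ ≤ 2 * 1 := by linarith
        _ = 2 := by norm_num
    have h2 : |4*|x-a| * pcut e1 ((x-a)/ν) / ν| ≤ 32 := by
      rw [abs_div, abs_of_pos hν, abs_mul, abs_mul, abs_abs]
      rw [div_le_iff₀ hν]
      calc |(4:ℝ)| * |x-a| * |pcut e1 ((x-a)/ν)| ≤ 4 * ν * 8 := by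
            have := mul_le_mul (mul_le_mul (le_of_eq (abs_of_pos (by norm_num : (0:ℝ) < 4)))
              hu (abs_nonneg _) (by norm_num)) hP1 (abs_nonneg _)
              (by positivity)
            linarith
        _ = 32 * ν := by ring
    have h3 : |(x-a)*|x-a| * pcut e2 ((x-a)/ν) / ν^2| ≤ 56 := by
      rw [abs_div, abs_mul, abs_mul, abs_abs, abs_pow, abs_of_pos hν]
      rw [div_le_iff₀ (by positivity)]
      calc |x-a| * |x-a| * |pcut e2 ((x-a)/ν)| ≤ ν * ν * 56 := by
            have := mul_le_mul (mul_le_mul hu hu (abs_nonneg _) hν.le) hP2 (abs_nonneg _)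
              (by positivity)
            linarith
        _ = 56 * ν^2 := by ring
    calc |q2 ν a x| ≤ |2*sgn (x-a) * pcut e0 ((x-a)/ν) + 4*|x-a| * pcut e1 ((x-a)/ν) / ν|
          + |(x-a)*|x-a| * pcut e2 ((x-a)/ν) / ν^2| := abs_add_le _ _
      _ ≤ |2*sgn (x-a) * pcut e0 ((x-a)/ν)| + |4*|x-a| * pcut e1 ((x-a)/ν) / ν|
          + |(x-a)*|x-a| * pcut e2 ((x-a)/ν) / ν^2| := by
            have := abs_add_le (2*sgn (x-a) * pcut e0 ((x-a)/ν)) (4*|x-a| * pcut e1 ((x-a)/ν) / ν)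
            linarith
      _ ≤ 90 := by linarith
  · push_neg at ht
    simp [q2, pcut_eq_zero _ ht]

lemma q3_bound {ν : ℝ} (hν : 0 < ν) (a x : ℝ) : |q3 ν a x| ≤ 720 / ν := by
  by_cases ht : |(x-a)/ν| ≤ 1
  · have hu : |x - a| ≤ ν := abs_le_of_div hν ht
    have hP1 : |pcut e1 ((x-a)/ν)| ≤ 8 := pcut_bound e1 8 (by norm_num) e1_bound _
    have hP2 : |pcut e2 ((x-a)/ν)| ≤ 56 := pcut_bound e2 56 (by norm_num) e2_bound _
    have hP3 : |pcut e3 ((x-a)/ν)| ≤ 336 := pcut_bound e3 336 (by norm_num) e3_bound _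
    have h1 : |6*sgn (x-a) * pcut e1 ((x-a)/ν) / ν| ≤ 48 / ν := by
      rw [abs_div, abs_of_pos hν, abs_mul, abs_mul, abs_sgn]
      apply (div_le_div_iff_of_pos_right hν).mpr
      calc |(6:ℝ)| * 1 * |pcut e1 ((x-a)/ν)| = 6 * |pcut e1 ((x-a)/ν)| := by norm_num
        _ ≤ 48 := by linarith
    have h2 : |6*|x-a| * pcut e2 ((x-a)/ν) / ν^2| ≤ 336 / ν := by
      rw [abs_div, abs_mul, abs_mul, abs_abs, abs_pow, abs_of_pos hν]
      rw [div_le_div_iff₀ (by positivity) hν]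
      calc |(6:ℝ)| * |x-a| * |pcut e2 ((x-a)/ν)| * ν ≤ 6 * ν * 56 * ν := by
            have h6 : |(6:ℝ)| = 6 := by norm_num
            have := mul_le_mul (mul_le_mul (le_of_eq h6) hu (abs_nonneg _) (by norm_num)) hP2
              (abs_nonneg _) (by positivity)
            nlinarith [abs_nonneg (pcut e2 ((x-a)/ν))]
        _ = 336 * ν^2 := by ring
    have h3 : |(x-a)*|x-a| * pcut e3 ((x-a)/ν) / ν^3| ≤ 336 / ν := by
      rw [abs_div, abs_mul, abs_mul, abs_abs, abs_pow, abs_of_pos hν]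
      rw [div_le_div_iff₀ (by positivity) hν]
      calc |x-a| * |x-a| * |pcut e3 ((x-a)/ν)| * ν ≤ ν * ν * 336 * ν := by
            have := mul_le_mul (mul_le_mul hu hu (abs_nonneg _) hν.le) hP3 (abs_nonneg _)
              (by positivity)
            nlinarith [abs_nonneg (pcut e3 ((x-a)/ν))]
        _ = 336 * ν^3 := by ring
    calc |q3 ν a x| ≤ |6*sgn (x-a) * pcut e1 ((x-a)/ν) / ν + 6*|x-a| * pcut e2 ((x-a)/ν) / ν^2|
          + |(x-a)*|x-a| * pcut e3 ((x-a)/ν) / ν^3| := abs_add_le _ _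
      _ ≤ |6*sgn (x-a) * pcut e1 ((x-a)/ν) / ν| + |6*|x-a| * pcut e2 ((x-a)/ν) / ν^2|
          + |(x-a)*|x-a| * pcut e3 ((x-a)/ν) / ν^3| := by
            have := abs_add_le (6*sgn (x-a) * pcut e1 ((x-a)/ν) / ν)
              (6*|x-a| * pcut e2 ((x-a)/ν) / ν^2)
            linarith
      _ ≤ 48 / ν + 336 / ν + 336 / ν := by linarith
      _ = 720 / ν := by ring
  · push_neg at ht
    simp [q3, pcut_eq_zero _ ht]
    positivity

lemma pcut_e0_zero : pcut e0 0 = 1 := by norm_num [pcut, e0]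

lemma q2_cont_aux (ν a : ℝ) (c : ℝ) :
    ContinuousAt (fun x => c * pcut e0 ((x-a)/ν) + 4*|x-a| * pcut e1 ((x-a)/ν) / ν
      + (x-a)*|x-a| * pcut e2 ((x-a)/ν) / ν^2) a := by
  have c0 : ContinuousAt (fun x : ℝ => pcut e0 ((x-a)/ν)) a := (P0chain ν a a).continuousAt
  have c1 : ContinuousAt (fun x : ℝ => pcut e1 ((x-a)/ν)) a := (P1chain ν a a).continuousAt
  have c2 : ContinuousAt (fun x : ℝ => pcut e2 ((x-a)/ν)) a := (P2chain ν a a).continuousAt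
  have cabs : ContinuousAt (fun x : ℝ => |x - a|) a :=
    (continuous_abs.comp (continuous_id.sub continuous_const)).continuousAt
  have csub : ContinuousAt (fun x : ℝ => x - a) a :=
    (continuous_id.sub continuous_const).continuousAt
  exact ((c0.const_mul c).add ((((cabs.const_mul 4).mul c1).div_const ν))).add
    (((csub.mul cabs).mul c2).div_const (ν^2))

lemma q2_tendsto_left {ν : ℝ} (hν : 0 < ν) (a : ℝ) :
    Filter.Tendsto (q2 ν a) (nhdsWithin a (Set.Iio a)) (nhds (-2)) := by
  have hval : (fun x => (-2:ℝ) * pcut e0 ((x-a)/ν) + 4*|x-a| * pcut e1 ((x-a)/ν) / ν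
      + (x-a)*|x-a| * pcut e2 ((x-a)/ν) / ν^2) a = -2 := by
    simp [pcut_e0_zero]
  have h := ((q2_cont_aux ν a (-2)).continuousWithinAt (s := Set.Iio a)).tendsto
  norm_num [pcut_e0_zero] at h
  apply h.congr'
  filter_upwards [self_mem_nhdsWithin] with x hx
  have : sgn (x - a) = -1 := by
    simp only [Set.mem_Iio] at hx
    simp [sgn, sub_neg.mpr hx]
  unfold q2; rw [this]; ring

lemma q2_tendsto_right {ν : ℝ} (hν : 0 < ν) (a : ℝ) :
    Filter.Tendsto (q2 ν a) (nhdsWithin a (Set.Ioi a)) (nhds 2) := by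
  have hval : (fun x => (2:ℝ) * pcut e0 ((x-a)/ν) + 4*|x-a| * pcut e1 ((x-a)/ν) / ν
      + (x-a)*|x-a| * pcut e2 ((x-a)/ν) / ν^2) a = 2 := by
    simp [pcut_e0_zero]
  have h := ((q2_cont_aux ν a 2).continuousWithinAt (s := Set.Ioi a)).tendsto
  norm_num [pcut_e0_zero] at h
  apply h.congr'
  filter_upwards [self_mem_nhdsWithin] with x hx
  have : sgn (x - a) = 1 := by
    simp only [Set.mem_Ioi] at hx
    simp [sgn, not_lt.mpr (sub_nonneg.mpr hx.le)]
  unfold q2; rw [this]; ring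

/-- For `z₁ < … < z_k` and `i ∈ {0,…,k}`, `piece k z i` is the open interval
`(z_i, z_{i+1})` of the partition of `ℝ`, with the conventions `z₀ = -∞`, `z_{k+1} = ∞`. -/
def piece (k : ℕ) (z : Fin k → ℝ) (i : Fin (k + 1)) : Set ℝ :=
  {x : ℝ | (∀ j : Fin k, (j : ℕ) < (i : ℕ) → z j < x) ∧
    ∀ j : Fin k, (i : ℕ) ≤ (j : ℕ) → x < z j}

noncomputable def G1f (k : ℕ) (z α : Fin k → ℝ) (ν : ℝ) : ℝ → ℝ :=
  fun x => 1 + ∑ i : Fin k, α i * q1 ν (z i) x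

noncomputable def G2f (k : ℕ) (z α : Fin k → ℝ) (ν : ℝ) : ℝ → ℝ :=
  fun x => ∑ i : Fin k, α i * q2 ν (z i) x

noncomputable def G3f (k : ℕ) (z α : Fin k → ℝ) (ν : ℝ) : ℝ → ℝ :=
  fun x => ∑ i : Fin k, α i * q3 ν (z i) x

lemma Gfun_eq (k : ℕ) (z α : Fin k → ℝ) (ν : ℝ) :
    Gfun k z α ν = fun x => x + ∑ i : Fin k, α i * q0 ν (z i) x := by
  funext x
  unfold Gfun q0
  congr 1
  apply Finset.sum_congr rfl
  intro i _
  have hphi : phi ((x - z i)/ν) = pcut e0 ((x - z i)/ν) := rfl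
  rw [hphi]; ring

lemma Gfun_hasDeriv (k : ℕ) (z α : Fin k → ℝ) (ν : ℝ) (x : ℝ) :
    HasDerivAt (Gfun k z α ν) (G1f k z α ν x) x := by
  rw [Gfun_eq]
  exact (hasDerivAt_id x).add
    (HasDerivAt.fun_sum fun i _ => (q0_deriv ν (z i) x).const_mul (α i))

lemma Gfun_deriv (k : ℕ) (z α : Fin k → ℝ) (ν : ℝ) :
    deriv (Gfun k z α ν) = G1f k z α ν :=
  funext fun x => (Gfun_hasDeriv k z α ν x).deriv

lemma G1f_hasDeriv (k : ℕ) (z α : Fin k → ℝ) (ν : ℝ) {x : ℝ} (hx : ∀ j, x ≠ z j) :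
    HasDerivAt (G1f k z α ν) (G2f k z α ν x) x := by
  have := (hasDerivAt_const x (1:ℝ)).add
    (HasDerivAt.fun_sum fun i (_ : i ∈ Finset.univ) => (q1_deriv (ν := ν) (hx i)).const_mul (α i))
  exact this.congr_deriv (by simp [G2f])

lemma G2f_hasDeriv (k : ℕ) (z α : Fin k → ℝ) (ν : ℝ) {x : ℝ} (hx : ∀ j, x ≠ z j) :
    HasDerivAt (G2f k z α ν) (G3f k z α ν x) x :=
  HasDerivAt.fun_sum fun i (_ : i ∈ Finset.univ) => (q2_deriv (ν := ν) (hx i)).const_mul (α i)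

lemma Gfun_deriv2 (k : ℕ) (z α : Fin k → ℝ) (ν : ℝ) {x : ℝ} (hx : ∀ j, x ≠ z j) :
    deriv (deriv (Gfun k z α ν)) x = G2f k z α ν x := by
  rw [Gfun_deriv]
  exact (G1f_hasDeriv k z α ν hx).deriv

lemma piece_ne {k : ℕ} {z : Fin k → ℝ} {i : Fin (k+1)} {x : ℝ} (hx : x ∈ piece k z i) :
    ∀ j, x ≠ z j := by
  intro j
  rcases lt_or_ge (j : ℕ) (i : ℕ) with h | h
  · exact (hx.1 j h).ne'
  · exact (hx.2 j h).ne

lemma piece_convex (k : ℕ) (z : Fin k → ℝ) (i : Fin (k+1)) : Convex ℝ (piece k z i) := by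
  have : Set.OrdConnected (piece k z i) := by
    constructor
    intro x hx y hy w hw
    exact ⟨fun j hj => lt_of_lt_of_le (hx.1 j hj) hw.1,
      fun j hj => lt_of_le_of_lt hw.2 (hy.2 j hj)⟩
  exact this.convex

lemma gap_lemma {k : ℕ} {z : Fin k → ℝ} (hz : StrictMono z) {ν : ℝ}
    (hν2 : ∀ i j : Fin k, (i : ℕ) + 1 = (j : ℕ) → ν < (z j - z i) / 2)
    {i j : Fin k} (hij : (i : ℕ) < (j : ℕ)) : z i + 2*ν < z j := by
  have hik : (i : ℕ) + 1 < k := lt_of_le_of_lt (Nat.succ_le_of_lt hij) j.isLt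
  set i' : Fin k := ⟨(i : ℕ) + 1, hik⟩ with hi'
  have h1 := hν2 i i' rfl
  have h2 : z i' ≤ z j := hz.monotone (by simp [hi', Fin.le_def]; omega)
  linarith

/-- For `k ≥ 1`, `z₁ < … < z_k`, `α ∈ ℝ^k` and `ν ∈ (0, ρ_{z,α})`:
on each open interval `(z_{i-1}, z_i)` of the partition, `G_{z,α,ν}'` is differentiable
with derivative `G_{z,α,ν}''` bounded and Lipschitz continuous there; moreover the
one-sided limits of `G_{z,α,ν}''` at every `z_i` exist and equal `-2α_i` (from the left)
and `2α_i` (from the right). -/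
theorem stmt_5 (k : ℕ) (hk : 1 ≤ k) (z α : Fin k → ℝ) (hz : StrictMono z)
    (ν : ℝ) (hν0 : 0 < ν)
    (hν1 : ∀ i : Fin k, ν * (8 * |α i|) < 1)
    (hν2 : ∀ i j : Fin k, (i : ℕ) + 1 = (j : ℕ) → ν < (z j - z i) / 2) :
    (∀ i : Fin (k + 1),
      (∀ x ∈ piece k z i, DifferentiableAt ℝ (deriv (Gfun k z α ν)) x) ∧
      (∃ C : ℝ, ∀ x ∈ piece k z i, |deriv (deriv (Gfun k z α ν)) x| ≤ C) ∧
      (∃ K : NNReal, LipschitzOnWith K (deriv (deriv (Gfun k z α ν))) (piece k z i))) ∧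
    (∀ i : Fin k,
      Filter.Tendsto (deriv (deriv (Gfun k z α ν)))
        (nhdsWithin (z i) (Set.Iio (z i))) (nhds (-2 * α i)) ∧
      Filter.Tendsto (deriv (deriv (Gfun k z α ν)))
        (nhdsWithin (z i) (Set.Ioi (z i))) (nhds (2 * α i))) := by
  constructor
  · intro i
    refine ⟨?_, ?_, ?_⟩
    · intro x hx
      rw [Gfun_deriv]
      exact (G1f_hasDeriv k z α ν (piece_ne hx)).differentiableAt
    · refine ⟨∑ j : Fin k, |α j| * 90, ?_⟩
      intro x hx
      rw [Gfun_deriv2 k z α ν (piece_ne hx)]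
      calc |G2f k z α ν x| ≤ ∑ j : Fin k, |α j * q2 ν (z j) x| :=
            Finset.abs_sum_le_sum_abs _ _
        _ ≤ ∑ j : Fin k, |α j| * 90 := by
            apply Finset.sum_le_sum
            intro j _
            rw [abs_mul]
            exact mul_le_mul_of_nonneg_left (q2_bound hν0 (z j) x) (abs_nonneg _)
    · refine ⟨(∑ j : Fin k, |α j| * (720/ν)).toNNReal, ?_⟩
      have hC0 : 0 ≤ ∑ j : Fin k, |α j| * (720/ν) := by
        apply Finset.sum_nonneg
        intro j _
        positivity
      apply (piece_convex k z i).lipschitzOnWith_of_nnnorm_hasDerivWithin_le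
        (f' := G3f k z α ν)
      · intro x hx
        exact ((G2f_hasDeriv k z α ν (piece_ne hx)).hasDerivWithinAt).congr
          (fun y hy => Gfun_deriv2 k z α ν (piece_ne hy))
          (Gfun_deriv2 k z α ν (piece_ne hx))
      · intro x hx
        rw [← NNReal.coe_le_coe, coe_nnnorm, Real.coe_toNNReal _ hC0, Real.norm_eq_abs]
        calc |G3f k z α ν x| ≤ ∑ j : Fin k, |α j * q3 ν (z j) x| :=
              Finset.abs_sum_le_sum_abs _ _
          _ ≤ ∑ j : Fin k, |α j| * (720/ν) := by
              apply Finset.sum_le_sum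
              intro j _
              rw [abs_mul]
              exact mul_le_mul_of_nonneg_left (q3_bound hν0 (z j) x) (abs_nonneg _)
  · intro i
    have hfar : ∀ j : Fin k, j ≠ i → q2 ν (z j) (z i) = 0 := by
      intro j hj
      apply q2_far hν0
      rcases lt_or_gt_of_ne (fun h : (j:ℕ) = (i:ℕ) => hj (Fin.ext h)) with h | h
      · have := gap_lemma hz hν2 h
        rw [abs_of_pos (by linarith)]; linarith
      · have := gap_lemma hz hν2 h
        rw [abs_of_neg (by linarith)]; linarith
    have hrest : ∀ s : Set ℝ, Filter.Tendsto
        (fun x => ∑ j ∈ Finset.univ.erase i, α j * q2 ν (z j) x)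
        (nhdsWithin (z i) s) (nhds 0) := by
      intro s
      have h : Filter.Tendsto (fun x => ∑ j ∈ Finset.univ.erase i, α j * q2 ν (z j) x)
          (nhdsWithin (z i) s) (nhds (∑ j ∈ Finset.univ.erase i, (0:ℝ))) := by
        apply tendsto_finset_sum
        intro j hj
        have hji : j ≠ i := Finset.ne_of_mem_erase hj
        have hne : z i ≠ z j := fun h => hji (hz.injective h.symm)
        have hcont : ContinuousAt (q2 ν (z j)) (z i) := (q2_deriv hne).continuousAt
        have h0 := (hcont.continuousWithinAt (s := s)).tendsto.const_mul (α j)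
        rw [hfar j hji, mul_zero] at h0
        exact h0
      simpa using h
    have hsplit : G2f k z α ν = fun x =>
        (∑ j ∈ Finset.univ.erase i, α j * q2 ν (z j) x) + α i * q2 ν (z i) x := by
      funext x
      exact (Finset.sum_erase_add _ _ (Finset.mem_univ i)).symm
    have hne_near : ∀ x : ℝ, z i - ν < x → x < z i + ν → x ≠ z i → ∀ j : Fin k, x ≠ z j := by
      intro x hx1 hx2 hx3 j
      rcases lt_trichotomy ((j:ℕ)) ((i:ℕ)) with h | h | h
      · have hg := gap_lemma hz hν2 h
        have : z j < x := by linarith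
        exact this.ne'
      · rw [Fin.ext h]; exact hx3
      · have hg := gap_lemma hz hν2 h
        have : x < z j := by linarith
        exact this.ne
    constructor
    · have hleft : Filter.Tendsto (G2f k z α ν) (nhdsWithin (z i) (Set.Iio (z i)))
          (nhds (-2 * α i)) := by
        rw [hsplit]
        have h2 := (q2_tendsto_left hν0 (z i)).const_mul (α i)
        have h3 := (hrest (Set.Iio (z i))).add h2
        have h4 : (0:ℝ) + α i * -2 = -2 * α i := by ring
        rw [h4] at h3
        exact h3
      have hevl : G2f k z α ν =ᶠ[nhdsWithin (z i) (Set.Iio (z i))]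
          deriv (deriv (Gfun k z α ν)) := by
        filter_upwards [self_mem_nhdsWithin,
          mem_nhdsWithin_of_mem_nhds (Ioi_mem_nhds (show z i - ν < z i by linarith))]
          with x hx1 hx2
        have hx1' : x < z i := hx1
        have hx2' : z i - ν < x := hx2
        exact (Gfun_deriv2 k z α ν (hne_near x hx2' (by linarith) hx1'.ne)).symm
      exact hleft.congr' hevl
    · have hright : Filter.Tendsto (G2f k z α ν) (nhdsWithin (z i) (Set.Ioi (z i)))
          (nhds (2 * α i)) := by
        rw [hsplit]
        have h2 := (q2_tendsto_right hν0 (z i)).const_mul (α i)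
        have h3 := (hrest (Set.Ioi (z i))).add h2
        have h4 : (0:ℝ) + α i * 2 = 2 * α i := by ring
        rw [h4] at h3
        exact h3
      have hevr : G2f k z α ν =ᶠ[nhdsWithin (z i) (Set.Ioi (z i))]
          deriv (deriv (Gfun k z α ν)) := by
        filter_upwards [self_mem_nhdsWithin,
          mem_nhdsWithin_of_mem_nhds (Iio_mem_nhds (show z i < z i + ν by linarith))]
          with x hx1 hx2
        have hx1' : z i < x := hx1
        have hx2' : x < z i + ν := hx2
        exact (Gfun_deriv2 k z α ν (hne_near x (by linarith) hx2' hx1'.ne')).symm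
      exact hright.congr' hevr
end
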